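/- Let F be a field of characteristic 0 and s ∈ F[[y]] a power series with s(0) ≠ 0 (order 0). Then the differential equation ψ'(y) = s(ψ(y)) has a solution ψ ∈ F[[y]] with ψ(0) = 0 and ψ'(0) ≠ 0 (i.e. ψ ∈ yF[[y]] with invertible linear coefficient). -/

import Mathlib

open PowerSeries

/-- Formal composition `f(ψ)` of power series, defined coefficientwise (this is the usual
substitution when `ψ` has zero constant term). -/
noncomputable def PowerSeries.compose {F : Type*} [CommRing F]
    (f ψ : PowerSeries F) : PowerSeries F :=
  PowerSeries.mk fun n => PowerSeries.coeff n (Polynomial.aeval ψ (f.trunc (n + 1)))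

lemma coeff_pow_congr {F : Type*} [CommRing F] {n : ℕ} {ψ₁ ψ₂ : PowerSeries F}
    (h : ∀ i ≤ n, PowerSeries.coeff i ψ₁ = PowerSeries.coeff i ψ₂) (k : ℕ) :
    ∀ m ≤ n, PowerSeries.coeff m (ψ₁ ^ k) = PowerSeries.coeff m (ψ₂ ^ k) := by
  induction k with
  | zero => intro m _; simp
  | succ k ih =>
    intro m hm
    rw [pow_succ, pow_succ, PowerSeries.coeff_mul, PowerSeries.coeff_mul]
    apply Finset.sum_congr rfl
    intro p hp
    rw [Finset.HasAntidiagonal.mem_antidiagonal] at hp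
    have h1 : p.1 ≤ n := le_trans (by omega) hm
    have h2 : p.2 ≤ n := le_trans (by omega) hm
    rw [ih p.1 h1, h p.2 h2]

lemma coeff_compose_congr {F : Type*} [CommRing F] {n : ℕ} (s : PowerSeries F)
    {ψ₁ ψ₂ : PowerSeries F}
    (h : ∀ i ≤ n, PowerSeries.coeff i ψ₁ = PowerSeries.coeff i ψ₂) :
    PowerSeries.coeff n (PowerSeries.compose s ψ₁) =
      PowerSeries.coeff n (PowerSeries.compose s ψ₂) := by
  rw [PowerSeries.compose, PowerSeries.compose, PowerSeries.coeff_mk, PowerSeries.coeff_mk,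
    Polynomial.aeval_eq_sum_range, Polynomial.aeval_eq_sum_range, map_sum, map_sum]
  apply Finset.sum_congr rfl
  intro i _
  rw [LinearMap.map_smul, LinearMap.map_smul, coeff_pow_congr h i n le_rfl]

noncomputable def solCoeff {F : Type*} [Field F] (s : PowerSeries F) : ℕ → F
  | 0 => 0
  | (n + 1) =>
      (PowerSeries.coeff n (PowerSeries.compose s
        (PowerSeries.mk fun k => if h : k ≤ n then solCoeff s k else 0))) / (n + 1)

/-- Let `F` be a field of characteristic `0` and `s ∈ F[[y]]` with
`s(0) ≠ 0`.  Then the formal differential equation `ψ'(y) = s(ψ(y))` has a solution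
`ψ ∈ yF[[y]]` with `ψ'(0) ≠ 0`, i.e. with zero constant term and invertible linear
coefficient. -/
theorem formal_ode_order_zero_solvable
    (F : Type*) [Field F] [CharZero F] (s : PowerSeries F)
    (hs : PowerSeries.constantCoeff s ≠ 0) :
    ∃ ψ : PowerSeries F,
      PowerSeries.constantCoeff ψ = 0 ∧
      PowerSeries.coeff 1 ψ ≠ 0 ∧
      ψ.derivativeFun = PowerSeries.compose s ψ := by
  set ψ : PowerSeries F := PowerSeries.mk (solCoeff s) with hψ
  have hc0 : PowerSeries.constantCoeff ψ = 0 := by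
    simp [hψ, ← PowerSeries.coeff_zero_eq_constantCoeff, solCoeff]
  have key : ∀ n : ℕ,
      PowerSeries.coeff n (PowerSeries.compose s ψ) = (n + 1) * solCoeff s (n + 1) := by
    intro n
    have hcong : PowerSeries.coeff n (PowerSeries.compose s ψ) =
        PowerSeries.coeff n (PowerSeries.compose s
          (PowerSeries.mk fun k => if h : k ≤ n then solCoeff s k else 0)) := by
      apply coeff_compose_congr
      intro i hi
      simp [hψ, hi]
    rw [hcong]
    conv_rhs => rw [solCoeff]
    rw [mul_div_cancel₀ _ (Nat.cast_add_one_ne_zero n)]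
  have hc1 : PowerSeries.coeff 1 ψ ≠ 0 := by
    have h0 : (PowerSeries.mk fun k => if h : k ≤ 0 then solCoeff s k else 0)
        = (0 : PowerSeries F) := by
      ext k
      rcases k with _ | k <;> simp [solCoeff]
    have : PowerSeries.coeff 1 ψ = PowerSeries.constantCoeff s := by
      rw [hψ, PowerSeries.coeff_mk]
      show solCoeff s (0 + 1) = _
      rw [solCoeff, h0]
      simp [PowerSeries.compose, Polynomial.aeval_def, Polynomial.eval₂_at_zero,
        PowerSeries.coeff_trunc, PowerSeries.algebraMap_apply]
    rw [this]; exact hs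
  refine ⟨ψ, hc0, hc1, ?_⟩
  ext n
  rw [show ψ.derivativeFun = PowerSeries.derivative F ψ from rfl, PowerSeries.coeff_derivativeFun, key n, hψ, PowerSeries.coeff_mk]
  push_cast
  ring
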